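/- For any kinematically admissible û ∈ V and any statically admissible flux p̂, defining the averaged flux p̂* = ½(p̂ + A∇û), one has 4 |||q − p̂*|||_F² = E_CRE(û, p̂)², where q = A∇u is the exact flux. -/

import Mathlib

open MeasureTheory Matrix

/-- The gradient of a function on `ℝ^d`, viewed as a plain vector in `Fin d → ℝ`. -/
noncomputable def grad {d : ℕ} (v : EuclideanSpace ℝ (Fin d) → ℝ)
    (x : EuclideanSpace ℝ (Fin d)) : Fin d → ℝ :=
  (gradient v x : EuclideanSpace ℝ (Fin d))

section Aux

variable {d : ℕ}

/-- The product of two L² functions is integrable. -/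
lemma l2_mul_integrable {X : Type*} [MeasurableSpace X] {μ : Measure X}
    {f g : X → ℝ} (hf : MemLp f 2 μ) (hg : MemLp g 2 μ) :
    Integrable (fun x => f x * g x) μ := by
  have hint : Integrable (fun x => (f x ^ 2 + g x ^ 2) / 2) μ :=
    (hf.integrable_sq.add hg.integrable_sq).div_const 2
  refine hint.mono' (hf.aestronglyMeasurable.mul hg.aestronglyMeasurable) ?_
  filter_upwards with x
  rw [Real.norm_eq_abs, abs_mul]
  nlinarith [sq_abs (f x), sq_abs (g x), sq_nonneg (|f x| - |g x|), abs_nonneg (f x),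
    abs_nonneg (g x)]

lemma coord_le_norm (z : EuclideanSpace ℝ (Fin d)) (i : Fin d) : |z i| ≤ ‖z‖ := by
  have h : ‖z‖ = Real.sqrt (∑ j, ‖z j‖ ^ 2) := EuclideanSpace.norm_eq z
  rw [h]
  have h2 : |z i| = Real.sqrt (‖z i‖ ^ 2) := by
    rw [Real.norm_eq_abs, Real.sqrt_sq_eq_abs, abs_abs]
  rw [h2]
  apply Real.sqrt_le_sqrt
  exact Finset.single_le_sum (f := fun j => ‖z j‖ ^ 2) (fun j _ => sq_nonneg _)
    (Finset.mem_univ i)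

lemma single_sq_sum (i : Fin d) : ∑ k, (Pi.single i (1:ℝ) : Fin d → ℝ) k ^ 2 = 1 := by
  simp [Pi.single_apply, sq, Finset.sum_ite_eq']

/-- Entries of an elliptic symmetric matrix are bounded by `2β`. -/
lemma entry_bound {M : Matrix (Fin d) (Fin d) ℝ} {α β : ℝ} (hα : 0 < α)
    (hs : M.IsSymm)
    (h : ∀ ξ : Fin d → ℝ, α * (∑ i, ξ i ^ 2) ≤ M *ᵥ ξ ⬝ᵥ ξ ∧ M *ᵥ ξ ⬝ᵥ ξ ≤ β * (∑ i, ξ i ^ 2))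
    (i j : Fin d) : |M i j| ≤ 2 * β := by
  have hsym : M j i = M i j := hs.apply i j
  set ei : Fin d → ℝ := Pi.single i 1 with hei
  set ej : Fin d → ℝ := Pi.single j 1 with hej
  have hMij : M *ᵥ ej ⬝ᵥ ei = M i j := by
    rw [hej, hei, Matrix.mulVec_single, dotProduct_single]
    simp
  have hMji : M *ᵥ ei ⬝ᵥ ej = M j i := by
    rw [hej, hei, Matrix.mulVec_single, dotProduct_single]
    simp
  have hexp : M *ᵥ (ei + ej) ⬝ᵥ (ei + ej) = M *ᵥ ei ⬝ᵥ ei + M *ᵥ ej ⬝ᵥ ej + (M j i + M i j) := by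
    rw [Matrix.mulVec_add]
    simp only [add_dotProduct, dotProduct_add]
    rw [← hMij, ← hMji]; ring
  have hsum : ∑ k, (ei + ej) k ^ 2 ≤ 4 := by
    have h1 : ∀ k, (ei + ej) k ^ 2 ≤ 2 * ei k ^ 2 + 2 * ej k ^ 2 := by
      intro k
      have := sq_nonneg (ei k - ej k)
      simp only [Pi.add_apply]
      nlinarith
    calc ∑ k, (ei + ej) k ^ 2 ≤ ∑ k, (2 * ei k ^ 2 + 2 * ej k ^ 2) :=
          Finset.sum_le_sum fun k _ => h1 k
      _ = 2 * ∑ k, ei k ^ 2 + 2 * ∑ k, ej k ^ 2 := by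
          rw [Finset.sum_add_distrib, Finset.mul_sum, Finset.mul_sum]
      _ = 4 := by rw [hei, hej, single_sq_sum, single_sq_sum]; norm_num
  have hαβ : α ≤ β := by
    by_cases hd : (0:ℝ) < ∑ k, ei k ^ 2
    · have h1 := (h ei).1
      have h2 := (h ei).2
      nlinarith
    · -- degenerate: d = 0 is impossible since ∑ ei² = 1
      exfalso
      rw [hei, single_sq_sum] at hd
      norm_num at hd
  have hBu : M *ᵥ (ei + ej) ⬝ᵥ (ei + ej) ≤ 4 * β := by
    calc M *ᵥ (ei + ej) ⬝ᵥ (ei + ej) ≤ β * ∑ k, (ei + ej) k ^ 2 := (h _).2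
      _ ≤ β * 4 := by
          apply mul_le_mul_of_nonneg_left hsum (le_trans hα.le hαβ)
      _ = 4 * β := by ring
  have hBl : 0 ≤ M *ᵥ (ei + ej) ⬝ᵥ (ei + ej) := by
    refine le_trans ?_ (h _).1
    positivity
  have hQi1 : α * 1 ≤ M *ᵥ ei ⬝ᵥ ei := by
    have := (h ei).1; rwa [hei, single_sq_sum] at this
  have hQj1 : α * 1 ≤ M *ᵥ ej ⬝ᵥ ej := by
    have := (h ej).1; rwa [hej, single_sq_sum] at this
  have hQi2 : M *ᵥ ei ⬝ᵥ ei ≤ β * 1 := by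
    have := (h ei).2; rwa [hei, single_sq_sum] at this
  have hQj2 : M *ᵥ ej ⬝ᵥ ej ≤ β * 1 := by
    have := (h ej).2; rwa [hej, single_sq_sum] at this
  rw [abs_le]
  rw [hsym] at hexp
  constructor
  · nlinarith [hexp, hBl, hQi2, hQj2]
  · nlinarith [hexp, hBu, hQi1, hQj1]

lemma posdef_of_elliptic {M : Matrix (Fin d) (Fin d) ℝ} {α : ℝ} (hα : 0 < α)
    (hs : M.IsSymm)
    (hlow : ∀ ξ : Fin d → ℝ, α * (∑ i, ξ i ^ 2) ≤ M *ᵥ ξ ⬝ᵥ ξ) :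
    M.PosDef := by
  rw [Matrix.posDef_iff_dotProduct_mulVec]
  constructor
  · rw [Matrix.IsHermitian]
    ext i j
    simp [Matrix.conjTranspose_apply, hs.apply]
  · intro x hx
    have hstar : star x = x := by simp
    rw [hstar, dotProduct_comm]
    have hpos : 0 < ∑ i, x i ^ 2 := by
      obtain ⟨i, hi⟩ : ∃ i, x i ≠ 0 := by
        by_contra hcon
        push_neg at hcon
        exact hx (funext hcon)
      exact Finset.sum_pos' (fun _ _ => sq_nonneg _)
        ⟨i, Finset.mem_univ i, by positivity⟩
    calc (0:ℝ) < α * ∑ i, x i ^ 2 := by positivity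
      _ ≤ M *ᵥ x ⬝ᵥ x := hlow x

lemma isUnit_det_of_elliptic {M : Matrix (Fin d) (Fin d) ℝ} {α : ℝ} (hα : 0 < α)
    (hs : M.IsSymm)
    (hlow : ∀ ξ : Fin d → ℝ, α * (∑ i, ξ i ^ 2) ≤ M *ᵥ ξ ⬝ᵥ ξ) :
    IsUnit M.det :=
  ((posdef_of_elliptic hα hs hlow).det_pos.ne').isUnit

/-- Quadratic form bound for the inverse of an elliptic symmetric matrix. -/
lemma inv_quad_bound {M : Matrix (Fin d) (Fin d) ℝ} {α : ℝ} (hα : 0 < α)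
    (hdet : IsUnit M.det)
    (hlow : ∀ ξ : Fin d → ℝ, α * (∑ i, ξ i ^ 2) ≤ M *ᵥ ξ ⬝ᵥ ξ)
    (s : Fin d → ℝ) :
    0 ≤ M⁻¹ *ᵥ s ⬝ᵥ s ∧ M⁻¹ *ᵥ s ⬝ᵥ s ≤ (1 / α) * ∑ i, s i ^ 2 := by
  obtain ⟨η, hη⟩ : ∃ η : Fin d → ℝ, M *ᵥ η = s :=
    ⟨M⁻¹ *ᵥ s, by rw [Matrix.mulVec_mulVec, Matrix.mul_nonsing_inv _ hdet, Matrix.one_mulVec]⟩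
  subst hη
  have hback : M⁻¹ *ᵥ (M *ᵥ η) = η := by
    rw [Matrix.mulVec_mulVec, Matrix.nonsing_inv_mul _ hdet, Matrix.one_mulVec]
  rw [hback, dotProduct_comm]
  have h1 : α * ∑ i, η i ^ 2 ≤ M *ᵥ η ⬝ᵥ η := hlow η
  have hη2 : (0:ℝ) ≤ ∑ i, η i ^ 2 := Finset.sum_nonneg fun _ _ => sq_nonneg _
  have hnn : 0 ≤ M *ᵥ η ⬝ᵥ η := le_trans (by positivity) h1
  refine ⟨hnn, ?_⟩
  have hts : M *ᵥ η ⬝ᵥ η = ∑ i, η i * (M *ᵥ η) i := dotProduct_comm _ _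
  have hCS : (∑ i, η i * (M *ᵥ η) i) ^ 2 ≤ (∑ i, η i ^ 2) * ∑ i, (M *ᵥ η) i ^ 2 :=
    Finset.sum_mul_sq_le_sq_mul_sq _ _ _
  have hS : (0:ℝ) ≤ ∑ i, (M *ᵥ η) i ^ 2 := Finset.sum_nonneg fun _ _ => sq_nonneg _
  set t : ℝ := M *ᵥ η ⬝ᵥ η with htdef
  rcases eq_or_lt_of_le hnn with h0 | hpos
  · rw [← h0]; positivity
  · have key : α * t ^ 2 ≤ t * ∑ i, (M *ᵥ η) i ^ 2 := by
      calc α * t ^ 2 = α * (∑ i, η i * (M *ᵥ η) i) ^ 2 := by rw [← hts]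
        _ ≤ α * ((∑ i, η i ^ 2) * ∑ i, (M *ᵥ η) i ^ 2) := mul_le_mul_of_nonneg_left hCS hα.le
        _ = (α * ∑ i, η i ^ 2) * ∑ i, (M *ᵥ η) i ^ 2 := by ring
        _ ≤ t * ∑ i, (M *ᵥ η) i ^ 2 := mul_le_mul_of_nonneg_right h1 hS
    have hαt : α * t ≤ ∑ i, (M *ᵥ η) i ^ 2 := by nlinarith
    rw [one_div]
    calc t = α⁻¹ * (α * t) := by rw [← mul_assoc, inv_mul_cancel₀ hα.ne', one_mul]
      _ ≤ α⁻¹ * ∑ i, (M *ᵥ η) i ^ 2 := mul_le_mul_of_nonneg_left hαt (by positivity)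

/-- The key algebraic identity. -/
lemma key_alg {M : Matrix (Fin d) (Fin d) ℝ} (hs : M.IsSymm) (hdet : IsUnit M.det)
    (gu gh ph : Fin d → ℝ) :
    4 * (M⁻¹ *ᵥ (M *ᵥ gu - (1 / 2 : ℝ) • (ph + M *ᵥ gh))
          ⬝ᵥ (M *ᵥ gu - (1 / 2 : ℝ) • (ph + M *ᵥ gh)))
      = M⁻¹ *ᵥ (ph - M *ᵥ gh) ⬝ᵥ (ph - M *ᵥ gh)
        + 4 * ((M *ᵥ gu - ph) ⬝ᵥ (gu - gh)) := by
  set a : Fin d → ℝ := M *ᵥ gu - ph with ha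
  set b : Fin d → ℝ := M *ᵥ gu - M *ᵥ gh with hbdef
  have hb : M⁻¹ *ᵥ b = gu - gh := by
    rw [hbdef, ← Matrix.mulVec_sub, Matrix.mulVec_mulVec,
      Matrix.nonsing_inv_mul _ hdet, Matrix.one_mulVec]
  have hNsymm : (M⁻¹)ᵀ = M⁻¹ := by
    rw [Matrix.transpose_nonsing_inv, hs.eq]
  have hsymmdot : ∀ v w : Fin d → ℝ, M⁻¹ *ᵥ v ⬝ᵥ w = v ⬝ᵥ M⁻¹ *ᵥ w := by
    intro v w
    have h1 : M⁻¹ *ᵥ v = v ᵥ* M⁻¹ := by rw [← Matrix.mulVec_transpose, hNsymm]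
    rw [h1, ← Matrix.dotProduct_mulVec]
  have e1 : M *ᵥ gu - (1 / 2 : ℝ) • (ph + M *ᵥ gh) = (1 / 2 : ℝ) • (a + b) := by
    funext i
    simp only [ha, hbdef, Pi.smul_apply, Pi.add_apply, Pi.sub_apply, smul_eq_mul]
    ring
  have e2 : ph - M *ᵥ gh = b - a := by
    funext i
    simp only [ha, hbdef, Pi.sub_apply]
    ring
  have h2 : M⁻¹ *ᵥ a ⬝ᵥ b = a ⬝ᵥ (gu - gh) := by rw [hsymmdot, hb]
  have h3 : M⁻¹ *ᵥ b ⬝ᵥ a = a ⬝ᵥ (gu - gh) := by rw [hb, dotProduct_comm]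
  have hQ1 : M⁻¹ *ᵥ ((1 / 2 : ℝ) • (a + b)) ⬝ᵥ ((1 / 2 : ℝ) • (a + b))
      = (1 / 4) * (M⁻¹ *ᵥ a ⬝ᵥ a + M⁻¹ *ᵥ a ⬝ᵥ b + M⁻¹ *ᵥ b ⬝ᵥ a + M⁻¹ *ᵥ b ⬝ᵥ b) := by
    simp only [Matrix.mulVec_smul, smul_dotProduct, dotProduct_smul,
      Matrix.mulVec_add, add_dotProduct, dotProduct_add, smul_eq_mul]
    ring
  have hQ2 : M⁻¹ *ᵥ (b - a) ⬝ᵥ (b - a)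
      = M⁻¹ *ᵥ b ⬝ᵥ b - M⁻¹ *ᵥ b ⬝ᵥ a - M⁻¹ *ᵥ a ⬝ᵥ b + M⁻¹ *ᵥ a ⬝ᵥ a := by
    simp only [Matrix.mulVec_sub, sub_dotProduct, dotProduct_sub]
    ring
  rw [e1, e2, hQ1, hQ2, h2, h3]
  ring

end Aux

/-- For a kinematically admissible `uhat ∈ V` and a statically admissible flux `phat`,
with the averaged flux `p* = (phat + A∇uhat)/2`, one has
`4 |||q − p*|||_F² = E_CRE(uhat, phat)²` where `q = A∇u` is the exact flux. -/
theorem cre_averaged_flux_identity {d : ℕ}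
    (Ω : Set (EuclideanSpace ℝ (Fin d)))
    (hΩopen : IsOpen Ω) (hΩbdd : Bornology.IsBounded Ω)
    (A : EuclideanSpace ℝ (Fin d) → Matrix (Fin d) (Fin d) ℝ)
    (hAmeas : ∀ i j, Measurable fun x => A x i j)
    (hAsymm : ∀ x ∈ Ω, (A x).IsSymm)
    (α β : ℝ) (hα : 0 < α) (hβ : 0 < β)
    (hell : ∀ᵐ x ∂(volume.restrict Ω), ∀ ξ : Fin d → ℝ,
      α * (∑ i, ξ i ^ 2) ≤ (A x).mulVec ξ ⬝ᵥ ξ ∧ (A x).mulVec ξ ⬝ᵥ ξ ≤ β * (∑ i, ξ i ^ 2))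
    (V : Submodule ℝ (EuclideanSpace ℝ (Fin d) → ℝ))
    (hVdiff : ∀ v ∈ V, ContDiffOn ℝ 1 v Ω)
    (hVL2 : ∀ v ∈ V, MemLp v 2 (volume.restrict Ω))
    (hVgradL2 : ∀ v ∈ V, MemLp (gradient v) 2 (volume.restrict Ω))
    (f : EuclideanSpace ℝ (Fin d) → ℝ) (hf : MemLp f 2 (volume.restrict Ω))
    (u : EuclideanSpace ℝ (Fin d) → ℝ) (hu : u ∈ V)
    (husol : ∀ v ∈ V,
      ∫ x in Ω, (A x).mulVec (grad u x) ⬝ᵥ grad v x = ∫ x in Ω, f x * v x)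
    (uhat : EuclideanSpace ℝ (Fin d) → ℝ) (huhat : uhat ∈ V)
    (phat : EuclideanSpace ℝ (Fin d) → Fin d → ℝ)
    (hphatL2 : MemLp phat 2 (volume.restrict Ω))
    (hphatSA : ∀ v ∈ V, ∫ x in Ω, phat x ⬝ᵥ grad v x = ∫ x in Ω, f x * v x)
    :
    4 * (∫ x in Ω,
          ((A x)⁻¹).mulVec
              ((A x).mulVec (grad u x) - (1 / 2 : ℝ) • (phat x + (A x).mulVec (grad uhat x)))
            ⬝ᵥ ((A x).mulVec (grad u x) - (1 / 2 : ℝ) • (phat x + (A x).mulVec (grad uhat x))))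
      = ∫ x in Ω, ((A x)⁻¹).mulVec (phat x - (A x).mulVec (grad uhat x))
            ⬝ᵥ (phat x - (A x).mulVec (grad uhat x)) := by
  classical
  set μ := volume.restrict Ω with hμ
  have hΩm : MeasurableSet Ω := hΩopen.measurableSet
  have hae : ∀ᵐ x ∂μ, x ∈ Ω := ae_restrict_mem hΩm
  -- continuity of coordinate projections on EuclideanSpace
  have contProj : ∀ i : Fin d, Continuous fun z : EuclideanSpace ℝ (Fin d) => z i := fun i =>
    (continuous_apply i).comp (PiLp.continuousLinearEquiv 2 ℝ (fun _ : Fin d => ℝ)).continuous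
  -- components of gradients are L²
  have compGrad : ∀ v ∈ V, ∀ i : Fin d, MemLp (fun x => grad v x i) 2 μ := by
    intro v hv i
    refine (hVgradL2 v hv).mono
      ((contProj i).comp_aestronglyMeasurable (hVgradL2 v hv).aestronglyMeasurable) ?_
    filter_upwards with x
    rw [Real.norm_eq_abs]
    exact coord_le_norm (gradient v x) i
  -- components of phat are L²
  have compPhat : ∀ i : Fin d, MemLp (fun x => phat x i) 2 μ := fun i =>
    hphatL2.mono ((continuous_apply i).comp_aestronglyMeasurable hphatL2.aestronglyMeasurable)
      (by filter_upwards with x; exact norm_le_pi_norm (phat x) i)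
  -- components of A ∇v are L²
  have compFlux : ∀ v ∈ V, ∀ i : Fin d,
      MemLp (fun x => ((A x) *ᵥ grad v x) i) 2 μ := by
    intro v hv i
    have heq : (fun x => ((A x) *ᵥ grad v x) i) = fun x => ∑ j, A x i j * grad v x j := by
      funext x
      simp [Matrix.mulVec, dotProduct]
    rw [heq]
    have : (fun x => ∑ j, A x i j * grad v x j)
        = ∑ j, (fun x => A x i j * grad v x j) := by
      funext x; simp
    rw [this]
    refine memLp_finset_sum' _ fun j _ => ?_
    have hgj := compGrad v hv j
    refine (hgj.const_mul (2 * β)).mono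
      ((hAmeas i j).aestronglyMeasurable.mul hgj.aestronglyMeasurable) ?_
    filter_upwards [hell, hae] with x hx hxΩ
    rw [Real.norm_eq_abs, Real.norm_eq_abs, abs_mul, abs_mul]
    have hAb : |A x i j| ≤ 2 * β := entry_bound hα (hAsymm x hxΩ) hx i j
    have h2β : |(2:ℝ) * β| = 2 * β := abs_of_pos (by positivity)
    rw [h2β]
    exact mul_le_mul_of_nonneg_right hAb (abs_nonneg _)
  -- dot products of component-wise L² vector fields are integrable
  have dotInt : ∀ (g₁ g₂ : EuclideanSpace ℝ (Fin d) → Fin d → ℝ),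
      (∀ i, MemLp (fun x => g₁ x i) 2 μ) → (∀ i, MemLp (fun x => g₂ x i) 2 μ) →
      Integrable (fun x => g₁ x ⬝ᵥ g₂ x) μ := by
    intro g₁ g₂ h₁ h₂
    have heq : (fun x => g₁ x ⬝ᵥ g₂ x) = fun x => ∑ i, g₁ x i * g₂ x i := by
      funext x; rfl
    rw [heq]
    exact integrable_finset_sum _ fun i _ => l2_mul_integrable (h₁ i) (h₂ i)
  -- the test function w = u - uhat
  set w : EuclideanSpace ℝ (Fin d) → ℝ := u - uhat with hwdef
  have hw : w ∈ V := V.sub_mem hu huhat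
  -- gradient of w on Ω
  have hgw : ∀ x ∈ Ω, grad w x = grad u x - grad uhat x := by
    intro x hx
    have hdu : DifferentiableAt ℝ u x :=
      (((hVdiff u hu).contDiffAt (hΩopen.mem_nhds hx)).differentiableAt one_ne_zero)
    have hduh : DifferentiableAt ℝ uhat x :=
      (((hVdiff uhat huhat).contDiffAt (hΩopen.mem_nhds hx)).differentiableAt one_ne_zero)
    have hgrad : gradient w x = gradient u x - gradient uhat x := by
      unfold gradient
      rw [hwdef]
      have : fderiv ℝ (u - uhat) x = fderiv ℝ u x - fderiv ℝ uhat x := by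
        rw [show (u - uhat) = fun y => u y - uhat y from rfl]
        exact fderiv_sub hdu hduh
      rw [this, map_sub]
    unfold grad
    rw [hgrad]
    exact WithLp.ofLp_sub (x := gradient u x) (y := gradient uhat x)
  -- main component families
  have compU : ∀ i : Fin d, MemLp (fun x => grad u x i) 2 μ := compGrad u hu
  have compUhat : ∀ i : Fin d, MemLp (fun x => grad uhat x i) 2 μ := compGrad uhat huhat
  have compW : ∀ i : Fin d, MemLp (fun x => grad w x i) 2 μ := compGrad w hw
  have compQ : ∀ i : Fin d, MemLp (fun x => ((A x) *ᵥ grad u x) i) 2 μ := compFlux u hu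
  have compQh : ∀ i : Fin d, MemLp (fun x => ((A x) *ᵥ grad uhat x) i) 2 μ :=
    compFlux uhat huhat
  -- components of r and s
  have compR : ∀ i : Fin d, MemLp
      (fun x => ((A x) *ᵥ grad u x - (1 / 2 : ℝ) • (phat x + (A x) *ᵥ grad uhat x)) i) 2 μ := by
    intro i
    exact (compQ i).sub (((compPhat i).add (compQh i)).const_mul (1 / 2))
  have compS : ∀ i : Fin d, MemLp
      (fun x => (phat x - (A x) *ᵥ grad uhat x) i) 2 μ := by
    intro i
    exact (compPhat i).sub (compQh i)
  -- measurability of entries of A⁻¹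
  have measDet : ∀ (B : EuclideanSpace ℝ (Fin d) → Matrix (Fin d) (Fin d) ℝ),
      (∀ i j, Measurable fun x => B x i j) → Measurable fun x => (B x).det := by
    intro B hB
    simp only [Matrix.det_apply']
    exact Finset.measurable_sum _ fun σ _ =>
      measurable_const.mul (Finset.measurable_prod _ fun i _ => hB (σ i) i)
  have hdetm : Measurable (fun x => (A x).det) := measDet A hAmeas
  have hinvm : ∀ i j, Measurable (fun x => (A x)⁻¹ i j) := by
    intro i j
    have heq : (fun x => (A x)⁻¹ i j)
        = fun x => Ring.inverse (A x).det * (A x).adjugate i j := by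
      funext x
      rw [Matrix.inv_def]
      simp [Matrix.smul_apply, smul_eq_mul]
    rw [heq]
    have h1 : Measurable fun x => Ring.inverse (A x).det := by
      simp only [Ring.inverse_eq_inv']; exact hdetm.inv
    have h2 : Measurable fun x => (A x).adjugate i j := by
      have heq2 : (fun x => (A x).adjugate i j)
          = fun x => ((A x).updateRow j (Pi.single i 1)).det := by
        funext x; rw [Matrix.adjugate_apply]
      rw [heq2]
      refine measDet _ fun k l => ?_
      rcases eq_or_ne k j with hk | hk
      · simp only [hk, Matrix.updateRow_apply, if_pos rfl]
        exact measurable_const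
      · simp only [Matrix.updateRow_apply, if_neg hk]
        exact hAmeas k l
    exact h1.mul h2
  -- AEStronglyMeasurable of quadratic forms A⁻¹ v ⬝ v for component-wise measurable v
  have quadMeas : ∀ (g : EuclideanSpace ℝ (Fin d) → Fin d → ℝ),
      (∀ i, AEStronglyMeasurable (fun x => g x i) μ) →
      AEStronglyMeasurable (fun x => (A x)⁻¹ *ᵥ g x ⬝ᵥ g x) μ := by
    intro g hg
    have heq : (fun x => (A x)⁻¹ *ᵥ g x ⬝ᵥ g x)
        = fun x => ∑ i, (∑ j, (A x)⁻¹ i j * g x j) * g x i := by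
      funext x
      simp [Matrix.mulVec, dotProduct]
    rw [heq]
    refine Finset.aestronglyMeasurable_fun_sum _ fun i _ => ?_
    refine AEStronglyMeasurable.mul ?_ (hg i)
    refine Finset.aestronglyMeasurable_fun_sum _ fun j _ => ?_
    exact ((hinvm i j).aestronglyMeasurable).mul (hg j)
  -- Integrability of the quadratic form integrands
  have quadInt : ∀ (g : EuclideanSpace ℝ (Fin d) → Fin d → ℝ),
      (∀ i, MemLp (fun x => g x i) 2 μ) →
      Integrable (fun x => (A x)⁻¹ *ᵥ g x ⬝ᵥ g x) μ := by
    intro g hg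
    have hdom : Integrable (fun x => (1 / α) * ∑ i, g x i ^ 2) μ :=
      (integrable_finset_sum _ fun i _ => (hg i).integrable_sq).const_mul _
    refine hdom.mono' (quadMeas g fun i => (hg i).aestronglyMeasurable) ?_
    filter_upwards [hell, hae] with x hx hxΩ
    have hbnd := inv_quad_bound hα
      (isUnit_det_of_elliptic hα (hAsymm x hxΩ) (fun ξ => (hx ξ).1)) (fun ξ => (hx ξ).1) (g x)
    rw [Real.norm_eq_abs, abs_of_nonneg hbnd.1]
    exact hbnd.2
  have hPint : Integrable (fun x =>
      ((A x)⁻¹).mulVec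
          ((A x).mulVec (grad u x) - (1 / 2 : ℝ) • (phat x + (A x).mulVec (grad uhat x)))
        ⬝ᵥ ((A x).mulVec (grad u x) - (1 / 2 : ℝ) • (phat x + (A x).mulVec (grad uhat x)))) μ :=
    quadInt _ compR
  have hQint : Integrable (fun x =>
      ((A x)⁻¹).mulVec (phat x - (A x).mulVec (grad uhat x))
        ⬝ᵥ (phat x - (A x).mulVec (grad uhat x))) μ :=
    quadInt _ compS
  -- the cross term and its integral
  have hSint : Integrable (fun x =>
      ((A x).mulVec (grad u x) - phat x) ⬝ᵥ (grad u x - grad uhat x)) μ := by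
    refine dotInt _ _ (fun i => (compQ i).sub (compPhat i)) (fun i => (compU i).sub (compUhat i))
  have hqgwInt : Integrable (fun x => (A x).mulVec (grad u x) ⬝ᵥ grad w x) μ :=
    dotInt _ _ compQ compW
  have hpgwInt : Integrable (fun x => phat x ⬝ᵥ grad w x) μ :=
    dotInt _ _ compPhat compW
  have hS0 : ∫ x, ((A x).mulVec (grad u x) - phat x) ⬝ᵥ (grad u x - grad uhat x) ∂μ = 0 := by
    have hcongr : ∀ᵐ x ∂μ,
        ((A x).mulVec (grad u x) - phat x) ⬝ᵥ (grad u x - grad uhat x)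
          = (A x).mulVec (grad u x) ⬝ᵥ grad w x - phat x ⬝ᵥ grad w x := by
      filter_upwards [hae] with x hx
      rw [hgw x hx, sub_dotProduct]
    rw [integral_congr_ae hcongr, integral_sub hqgwInt hpgwInt]
    have h1 := husol w hw
    have h2 := hphatSA w hw
    rw [hμ, h1, h2]
    ring
  -- pointwise a.e. key identity
  have hkey : ∀ᵐ x ∂μ,
      ((A x)⁻¹).mulVec (phat x - (A x).mulVec (grad uhat x))
          ⬝ᵥ (phat x - (A x).mulVec (grad uhat x))
        = 4 * (((A x)⁻¹).mulVec
              ((A x).mulVec (grad u x) - (1 / 2 : ℝ) • (phat x + (A x).mulVec (grad uhat x)))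
            ⬝ᵥ ((A x).mulVec (grad u x) - (1 / 2 : ℝ) • (phat x + (A x).mulVec (grad uhat x))))
          - 4 * (((A x).mulVec (grad u x) - phat x) ⬝ᵥ (grad u x - grad uhat x)) := by
    filter_upwards [hell, hae] with x hx hxΩ
    have hdet := isUnit_det_of_elliptic hα (hAsymm x hxΩ) (fun ξ => (hx ξ).1)
    have := key_alg (hAsymm x hxΩ) hdet (grad u x) (grad uhat x) (phat x)
    linarith
  -- assemble
  calc 4 * (∫ x in Ω,
        ((A x)⁻¹).mulVec
            ((A x).mulVec (grad u x) - (1 / 2 : ℝ) • (phat x + (A x).mulVec (grad uhat x)))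
          ⬝ᵥ ((A x).mulVec (grad u x) - (1 / 2 : ℝ) • (phat x + (A x).mulVec (grad uhat x))))
      = ∫ x, (4 * (((A x)⁻¹).mulVec
            ((A x).mulVec (grad u x) - (1 / 2 : ℝ) • (phat x + (A x).mulVec (grad uhat x)))
          ⬝ᵥ ((A x).mulVec (grad u x) - (1 / 2 : ℝ) • (phat x + (A x).mulVec (grad uhat x))))
          - 4 * (((A x).mulVec (grad u x) - phat x) ⬝ᵥ (grad u x - grad uhat x))) ∂μ := by
        rw [integral_sub (hPint.const_mul 4) (hSint.const_mul 4),
          integral_const_mul, integral_const_mul, hS0]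
        ring
    _ = ∫ x in Ω, ((A x)⁻¹).mulVec (phat x - (A x).mulVec (grad uhat x))
          ⬝ᵥ (phat x - (A x).mulVec (grad uhat x)) := (integral_congr_ae hkey).symm
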